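/- Let Y be a CAT(κ) space and η₀, η₁ : [0,1] → Y rectifiable curves with d(η₀(a), η₁(a)) < R_κ − δ for all a and some δ > 0. Let f(a,t) = γ_a(t) be the ruled map where γ_a is the geodesic from η₀(a) to η₁(a) parametrized proportionally to arclength. Then there exist constants L, ρ > 0 such that whenever d(η_i(a), η_i(b)) ≤ ρ for i = 0,1, one has d(γ_a(t), γ_b(t)) ≤ L·(d(η₀(a), η₀(b)) + d(η₁(a), η₁(b))) for all t ∈ [0,1]. Consequently, every horizontal curve a ↦ f(a,t) has length at most L·(ℓ(η₀) + ℓ(η₁)). -/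

import Mathlib

open Set Metric ENNReal unitInterval

noncomputable section

/-- The length of a curve parametrized by the unit interval, as total variation. -/
def curveELength {Y : Type*} [PseudoEMetricSpace Y] (c : unitInterval → Y) : ℝ≥0∞ :=
  eVariationOn c Set.univ

/-- The length pseudodistance induced by a map `f : X → Y`: the infimum of the lengths of
`f ∘ γ` over all curves `γ` joining the two points (`⊤` if there is no such curve). -/
def lengthPd {X Y : Type*} [TopologicalSpace X] [PseudoEMetricSpace Y]
    (f : X → Y) (x z : X) : ℝ≥0∞ :=
  ⨅ γ : Path x z, curveELength (fun t => f (γ t))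

/-- `f` is length-connected: the induced length pseudodistance is everywhere finite. -/
def LengthConnected {X Y : Type*} [TopologicalSpace X] [PseudoEMetricSpace Y]
    (f : X → Y) : Prop :=
  ∀ x z : X, lengthPd f x z ≠ ⊤

/-- The connecting pseudodistance induced by `f`: infimum of `diam (f '' C)` over connected
sets `C` containing both points. -/
def connPd {X Y : Type*} [TopologicalSpace X] [PseudoEMetricSpace Y]
    (f : X → Y) (x z : X) : ℝ≥0∞ :=
  ⨅ C : {C : Set X // IsConnected C ∧ x ∈ C ∧ z ∈ C}, EMetric.diam (f '' (C : Set X))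

/-- `g` does not increase the length of any curve, compared with `f`. -/
def IsShorter {X Y : Type*} [TopologicalSpace X] [PseudoEMetricSpace Y]
    (f g : X → Y) : Prop :=
  ∀ c : C(unitInterval, X), curveELength (fun t => g (c t)) ≤ curveELength (fun t => f (c t))

/-- `f` is length-minimizing relative to `Z`: any continuous competitor agreeing with `f`
on `Z` and not increasing the length of any curve in fact preserves all curve lengths. -/
def LengthMinimizing {X Y : Type*} [TopologicalSpace X] [PseudoEMetricSpace Y]
    (f : X → Y) (Z : Set X) : Prop :=
  Continuous f ∧ ∀ g : X → Y, Continuous g → Set.EqOn f g Z → IsShorter f g →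
    ∀ c : C(unitInterval, X), curveELength (fun t => g (c t)) = curveELength (fun t => f (c t))

/-- `γ : ℝ → Y` is a unit-speed geodesic from `x` to `y` (on `[0, dist x y]`). -/
def IsGeodesicParam {Y : Type*} [MetricSpace Y] (γ : ℝ → Y) (x y : Y) : Prop :=
  γ 0 = x ∧ γ (dist x y) = y ∧
    ∀ s ∈ Set.Icc (0:ℝ) (dist x y), ∀ t ∈ Set.Icc (0:ℝ) (dist x y),
      dist (γ s) (γ t) = |s - t|

/-- A geodesic metric space: any two points are joined by a geodesic. -/
def IsGeodesicSpace (Y : Type*) [MetricSpace Y] : Prop :=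
  ∀ x y : Y, ∃ γ : ℝ → Y, IsGeodesicParam γ x y

/-- The diameter `R_κ` of the model surface `M_κ`: `π/√κ` for `κ > 0`, `∞` otherwise. -/
def modelDiam (κ : ℝ) : ℝ≥0∞ :=
  if κ ≤ 0 then ⊤ else ENNReal.ofReal (Real.pi / Real.sqrt κ)

/-- Cosine of the angle opposite the side of length `c` in a triangle of side lengths
`a`, `b`, `c` in the model plane of curvature `κ` (law of cosines). -/
def modelCosAngle (κ a b c : ℝ) : ℝ :=
  if κ = 0 then (a ^ 2 + b ^ 2 - c ^ 2) / (2 * a * b)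
  else if 0 < κ then
    (Real.cos (Real.sqrt κ * c) - Real.cos (Real.sqrt κ * a) * Real.cos (Real.sqrt κ * b)) /
      (Real.sin (Real.sqrt κ * a) * Real.sin (Real.sqrt κ * b))
  else
    (Real.cosh (Real.sqrt (-κ) * a) * Real.cosh (Real.sqrt (-κ) * b) -
        Real.cosh (Real.sqrt (-κ) * c)) /
      (Real.sinh (Real.sqrt (-κ) * a) * Real.sinh (Real.sqrt (-κ) * b))

/-- Distance in the model plane of curvature `κ` between the endpoints of two segments of
lengths `a` and `b` emanating from a common vertex at an angle with cosine `cosθ`. -/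
def modelSideLength (κ a b cosθ : ℝ) : ℝ :=
  if κ = 0 then Real.sqrt (a ^ 2 + b ^ 2 - 2 * a * b * cosθ)
  else if 0 < κ then
    Real.arccos (Real.cos (Real.sqrt κ * a) * Real.cos (Real.sqrt κ * b) +
      Real.sin (Real.sqrt κ * a) * Real.sin (Real.sqrt κ * b) * cosθ) / Real.sqrt κ
  else
    -- `Real.log (x + √(x² - 1))` is the inverse hyperbolic cosine `arcosh x`
    Real.log ((Real.cosh (Real.sqrt (-κ) * a) * Real.cosh (Real.sqrt (-κ) * b) -
        Real.sinh (Real.sqrt (-κ) * a) * Real.sinh (Real.sqrt (-κ) * b) * cosθ) +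
      Real.sqrt ((Real.cosh (Real.sqrt (-κ) * a) * Real.cosh (Real.sqrt (-κ) * b) -
        Real.sinh (Real.sqrt (-κ) * a) * Real.sinh (Real.sqrt (-κ) * b) * cosθ) ^ 2 - 1)) /
      Real.sqrt (-κ)

/-- `Y` is a CAT(κ) space: complete, geodesic, and every geodesic triangle of perimeter
`< 2 R_κ` satisfies the point-side comparison with its model triangle in `M_κ`. -/
def IsCATSpace (κ : ℝ) (Y : Type*) [MetricSpace Y] : Prop :=
  CompleteSpace Y ∧ IsGeodesicSpace Y ∧
    ∀ p q r : Y, ∀ γ : ℝ → Y, IsGeodesicParam γ p q →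
      ENNReal.ofReal (dist p q + dist q r + dist r p) < 2 * modelDiam κ →
      ∀ s ∈ Set.Icc (0:ℝ) (dist p q),
        dist (γ s) r ≤
          modelSideLength κ s (dist p r) (modelCosAngle κ (dist p q) (dist p r) (dist q r))

/-- A set is geodesically convex if every geodesic between its points stays inside it. -/
def IsGeodesicallyConvex {Y : Type*} [MetricSpace Y] (K : Set Y) : Prop :=
  ∀ x ∈ K, ∀ y ∈ K, ∀ γ : ℝ → Y, IsGeodesicParam γ x y →
    ∀ t ∈ Set.Icc (0:ℝ) (dist x y), γ t ∈ K

/-- A finite graph (connected finite one-dimensional CW complex) structure on a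
topological space `Γ`: finitely many edges, injective away from endpoints, with
endpoints in a finite vertex set, covering `Γ`. -/
structure FiniteGraphStruct (Γ : Type*) [TopologicalSpace Γ] where
  n : ℕ
  edge : Fin n → C(unitInterval, Γ)
  vertices : Set Γ
  vertices_finite : vertices.Finite
  endpoints_mem : ∀ i, edge i 0 ∈ vertices ∧ edge i 1 ∈ vertices
  inj_on : ∀ i, Set.InjOn (edge i) {t : unitInterval | t ≠ 0 ∧ t ≠ 1}
  cover : ∀ x : Γ, x ∈ vertices ∨ ∃ i t, edge i t = x

end

-- ===== auxiliary development =====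
section helpers
open Real

lemma rm_cos_mul_add (u v x : ℝ) :
    cos u * cos v + sin u * sin v * x = ((1+x) * cos (u-v) + (1-x) * cos (u+v)) / 2 := by
  rw [Real.cos_sub, Real.cos_add]; ring

lemma rm_cosh_mul_sub (u v x : ℝ) :
    cosh u * cosh v - sinh u * sinh v * x = ((1-x) * cosh (u+v) + (1+x) * cosh (u-v)) / 2 := by
  rw [Real.cosh_sub, Real.cosh_add]; ring

lemma rm_one_sub_cos (θ : ℝ) : 1 - cos θ = 2 * sin (θ/2) ^ 2 := by
  have := Real.sin_sq_eq_half_sub (θ/2)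
  have h2 : 2 * (θ/2) = θ := by ring
  rw [h2] at this; linarith

/-- `arccos E ≥ √(2(1-E))` for `E ∈ [-1,1]`. -/
lemma rm_le_arccos {E : ℝ} (h1 : -1 ≤ E) (h2 : E ≤ 1) :
    Real.sqrt (2*(1-E)) ≤ arccos E := by
  have hθ0 := Real.arccos_nonneg E
  have hθπ := Real.arccos_le_pi E
  have hc : cos (arccos E) = E := Real.cos_arccos h1 h2
  have hs : sin (arccos E / 2) ≤ arccos E / 2 := Real.sin_le (by linarith)
  have hkey : 2*(1-E) ≤ (arccos E)^2 := by
    have := rm_one_sub_cos (arccos E)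
    nlinarith [Real.sin_nonneg_of_nonneg_of_le_pi (x := arccos E / 2) (by linarith) (by linarith)]
  calc Real.sqrt (2*(1-E)) ≤ Real.sqrt ((arccos E)^2) := Real.sqrt_le_sqrt hkey
    _ = arccos E := by rw [Real.sqrt_sq hθ0]

/-- `arccos E ≤ π √((1-E)/2)` for `E ∈ [-1,1]`. -/
lemma rm_arccos_le {E : ℝ} (h1 : -1 ≤ E) (h2 : E ≤ 1) :
    arccos E ≤ π * Real.sqrt ((1-E)/2) := by
  have hθ0 := Real.arccos_nonneg E
  have hθπ := Real.arccos_le_pi E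
  have hc : cos (arccos E) = E := Real.cos_arccos h1 h2
  have hs : 2/π * (arccos E / 2) ≤ sin (arccos E / 2) :=
    Real.mul_le_sin (by linarith) (by linarith)
  have hπ := Real.pi_pos
  have hsin0 : 0 ≤ sin (arccos E / 2) :=
    Real.sin_nonneg_of_nonneg_of_le_pi (by linarith) (by linarith)
  have h3 : (arccos E)^2 ≤ π^2 * ((1-E)/2) := by
    have hone := rm_one_sub_cos (arccos E)
    have ha : 0 ≤ 2/π * (arccos E / 2) := by positivity
    have h' : (2/π * (arccos E / 2))^2 ≤ sin (arccos E / 2) ^2 :=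
      pow_le_pow_left₀ ha hs 2
    have h2' : (2/π * (arccos E / 2))^2 = (arccos E)^2 / π^2 := by
      field_simp
    rw [h2'] at h'
    have : (arccos E)^2 / π^2 * π^2 = (arccos E)^2 := by field_simp
    nlinarith
  calc arccos E = Real.sqrt ((arccos E)^2) := (Real.sqrt_sq hθ0).symm
    _ ≤ Real.sqrt (π^2 * ((1-E)/2)) := Real.sqrt_le_sqrt h3
    _ = π * Real.sqrt ((1-E)/2) := by
        rw [Real.sqrt_mul (sq_nonneg π), Real.sqrt_sq Real.pi_pos.le]

/-- monotonicity of `arcosh`-formula. -/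
lemma rm_arcosh_mono {E F : ℝ} (h1 : 1 ≤ E) (h : E ≤ F) :
    Real.log (E + Real.sqrt (E^2-1)) ≤ Real.log (F + Real.sqrt (F^2-1)) := by
  apply Real.log_le_log (by nlinarith [Real.sqrt_nonneg (E^2-1)])
  have : Real.sqrt (E^2-1) ≤ Real.sqrt (F^2-1) := Real.sqrt_le_sqrt (by nlinarith)
  linarith

lemma rm_cosh_arcosh {E : ℝ} (h1 : 1 ≤ E) :
    Real.cosh (Real.log (E + Real.sqrt (E^2-1))) = E := by
  have hs : Real.sqrt (E^2-1) ^ 2 = E^2 - 1 := Real.sq_sqrt (by nlinarith)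
  have hspos : 0 ≤ Real.sqrt (E^2-1) := Real.sqrt_nonneg _
  have hy : (0:ℝ) < E + Real.sqrt (E^2-1) := by nlinarith
  rw [Real.cosh_eq, Real.exp_log hy, Real.exp_neg, Real.exp_log hy]
  have hinv : (E + Real.sqrt (E^2-1))⁻¹ = E - Real.sqrt (E^2-1) :=
    inv_eq_of_mul_eq_one_right (by nlinarith)
  rw [hinv]; ring

lemma rm_log_arcosh_eq {c : ℝ} (hc : 0 ≤ c) :
    Real.log (Real.cosh c + Real.sqrt (Real.cosh c ^2 - 1)) = c := by
  have h1 : Real.cosh c ^ 2 - 1 = Real.sinh c ^ 2 := by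
    have := Real.cosh_sq c; linarith
  rw [h1, Real.sqrt_sq (Real.sinh_nonneg_iff.2 hc), Real.cosh_add_sinh, Real.log_exp]

end helpers

section modelLemmas
open Real

variable {κ u v x : ℝ}

/-- L7: for κ>0, √κ * modelSideLength ≤ π. -/
lemma msl_le_pi (hκ : 0 < κ) (u v x : ℝ) : Real.sqrt κ * modelSideLength κ u v x ≤ π := by
  have hs : (0:ℝ) < Real.sqrt κ := Real.sqrt_pos.2 hκ
  rw [modelSideLength, if_neg hκ.ne', if_pos hκ]
  rw [mul_div_cancel₀ _ hs.ne']
  exact Real.arccos_le_pi _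

/-- L8: nonnegativity. -/
lemma msl_nonneg (hu : 0 ≤ u) (hv : 0 ≤ v) (hx : |x| ≤ 1) :
    0 ≤ modelSideLength κ u v x := by
  rw [modelSideLength]
  rcases abs_le.1 hx with ⟨hx1, hx2⟩
  split_ifs with h1 h2
  · exact Real.sqrt_nonneg _
  · have hs : (0:ℝ) < Real.sqrt κ := Real.sqrt_pos.2 h2
    exact div_nonneg (Real.arccos_nonneg _) hs.le
  · have hκneg : 0 < -κ := by
      rcases lt_trichotomy κ 0 with h|h|h
      · linarith
      · exact absurd h h1
      · exact absurd h h2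
    set A := Real.sqrt (-κ) * u
    set B := Real.sqrt (-κ) * v
    have hA : 0 ≤ A := by positivity
    have hB : 0 ≤ B := by positivity
    have hE : 1 ≤ cosh A * cosh B - sinh A * sinh B * x := by
      have h1 := Real.one_le_cosh (A - B)
      have := Real.cosh_sub A B
      nlinarith [mul_nonneg (Real.sinh_nonneg_iff.2 hA) (Real.sinh_nonneg_iff.2 hB)]
    have : 0 ≤ Real.log (cosh A * cosh B - sinh A * sinh B * x +
        Real.sqrt ((cosh A * cosh B - sinh A * sinh B * x)^2 - 1)) := by
      apply Real.log_nonneg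
      nlinarith [Real.sqrt_nonneg ((cosh A * cosh B - sinh A * sinh B * x)^2 - 1)]
    positivity

/-- symmetry of modelSideLength in the two side arguments. -/
lemma msl_symm (κ a b x : ℝ) : modelSideLength κ a b x = modelSideLength κ b a x := by
  rw [modelSideLength, modelSideLength]
  split_ifs with h1 h2
  · congr 1; ring
  · congr 2; ring
  · have h : ∀ y z : ℝ, y = z → Real.log (y + Real.sqrt (y^2-1)) = Real.log (z + Real.sqrt (z^2-1)) := by
      intro y z h; rw [h]
    rw [h _ _ (by ring :
      cosh (Real.sqrt (-κ) * a) * cosh (Real.sqrt (-κ) * b) -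
        sinh (Real.sqrt (-κ) * a) * sinh (Real.sqrt (-κ) * b) * x =
      cosh (Real.sqrt (-κ) * b) * cosh (Real.sqrt (-κ) * a) -
        sinh (Real.sqrt (-κ) * b) * sinh (Real.sqrt (-κ) * a) * x)]
end modelLemmas

section modelLemmas2
open Real

variable {κ a b c w w₁ w₂ x x₁ x₂ : ℝ}

lemma rm_kneg {κ : ℝ} (h1 : ¬κ = 0) (h2 : ¬0 < κ) : 0 < -κ := by
  rcases lt_trichotomy κ 0 with h|h|h
  · linarith
  · exact absurd h h1
  · exact absurd h h2

lemma rm_arccos_antitone {x y : ℝ} (h : x ≤ y) : Real.arccos y ≤ Real.arccos x := by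
  rw [Real.arccos_eq_pi_div_two_sub_arcsin, Real.arccos_eq_pi_div_two_sub_arcsin]
  have := Real.monotone_arcsin h
  linarith

/-- L1: `modelCosAngle` is antitone in the opposite side. -/
lemma mca_antitone (h0a : 0 < a) (h0b : 0 < b) (hw1 : 0 ≤ w₁) (hw : w₁ ≤ w₂)
    (ha : 0 < κ → Real.sqrt κ * a < π) (hb : 0 < κ → Real.sqrt κ * b < π)
    (hw2 : 0 < κ → Real.sqrt κ * w₂ ≤ π) :
    modelCosAngle κ a b w₂ ≤ modelCosAngle κ a b w₁ := by
  rw [modelCosAngle, modelCosAngle]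
  split_ifs with h1 h2
  · subst h1
    exact (div_le_div_iff_of_pos_right (by positivity)).2 (by nlinarith)
  · have hs : (0:ℝ) < Real.sqrt κ := Real.sqrt_pos.2 h2
    have hA : 0 < Real.sqrt κ * a := by positivity
    have hB : 0 < Real.sqrt κ * b := by positivity
    have hden : 0 < sin (Real.sqrt κ * a) * sin (Real.sqrt κ * b) :=
      mul_pos (Real.sin_pos_of_pos_of_lt_pi hA (ha h2))
        (Real.sin_pos_of_pos_of_lt_pi hB (hb h2))
    apply (div_le_div_iff_of_pos_right hden).2
    have : cos (Real.sqrt κ * w₂) ≤ cos (Real.sqrt κ * w₁) :=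
      Real.cos_le_cos_of_nonneg_of_le_pi (mul_nonneg hs.le hw1) (hw2 h2)
        (by nlinarith)
    linarith
  · have hk : 0 < -κ := rm_kneg h1 h2
    have hs : (0:ℝ) < Real.sqrt (-κ) := Real.sqrt_pos.2 hk
    have hden : 0 < sinh (Real.sqrt (-κ) * a) * sinh (Real.sqrt (-κ) * b) :=
      mul_pos (Real.sinh_pos_iff.2 (mul_pos hs h0a)) (Real.sinh_pos_iff.2 (mul_pos hs h0b))
    apply (div_le_div_iff_of_pos_right hden).2
    have : cosh (Real.sqrt (-κ) * w₁) ≤ cosh (Real.sqrt (-κ) * w₂) := by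
      rw [Real.cosh_le_cosh]
      rw [abs_of_nonneg (mul_nonneg hs.le hw1), abs_of_nonneg (mul_nonneg hs.le (hw1.trans hw))]
      nlinarith
    linarith

/-- L2: `modelSideLength` is antitone in the cosine argument. -/
lemma msl_antitone (h0a : 0 ≤ a) (h0b : 0 ≤ b) (hx : x₁ ≤ x₂) (hx2 : κ < 0 → x₂ ≤ 1)
    (ha : 0 < κ → Real.sqrt κ * a ≤ π) (hb : 0 < κ → Real.sqrt κ * b ≤ π) :
    modelSideLength κ a b x₂ ≤ modelSideLength κ a b x₁ := by
  rw [modelSideLength, modelSideLength]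
  split_ifs with h1 h2
  · exact Real.sqrt_le_sqrt (by nlinarith [mul_nonneg h0a h0b])
  · have hs : (0:ℝ) < Real.sqrt κ := Real.sqrt_pos.2 h2
    apply (div_le_div_iff_of_pos_right hs).2
    apply rm_arccos_antitone
    have hsinA : 0 ≤ sin (Real.sqrt κ * a) :=
      Real.sin_nonneg_of_nonneg_of_le_pi (by positivity) (ha h2)
    have hsinB : 0 ≤ sin (Real.sqrt κ * b) :=
      Real.sin_nonneg_of_nonneg_of_le_pi (by positivity) (hb h2)
    nlinarith [mul_nonneg hsinA hsinB]
  · have hk : 0 < -κ := rm_kneg h1 h2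
    have hκ : κ < 0 := by linarith
    have hs : (0:ℝ) < Real.sqrt (-κ) := Real.sqrt_pos.2 hk
    apply (div_le_div_iff_of_pos_right hs).2
    set A := Real.sqrt (-κ) * a with hAdef
    set B := Real.sqrt (-κ) * b with hBdef
    have hA : 0 ≤ A := by positivity
    have hB : 0 ≤ B := by positivity
    have hshA : 0 ≤ sinh A := Real.sinh_nonneg_iff.2 hA
    have hshB : 0 ≤ sinh B := Real.sinh_nonneg_iff.2 hB
    have hE2 : 1 ≤ cosh A * cosh B - sinh A * sinh B * x₂ := by
      have := Real.cosh_sub A B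
      have := Real.one_le_cosh (A - B)
      nlinarith [mul_nonneg hshA hshB, hx2 hκ]
    exact rm_arcosh_mono hE2 (by nlinarith [mul_nonneg hshA hshB])

/-- L3: recovering the cosine from the side length. -/
lemma mca_msl_inv (h0a : 0 < a) (h0b : 0 < b) (hx : |x| ≤ 1)
    (ha : 0 < κ → Real.sqrt κ * a < π) (hb : 0 < κ → Real.sqrt κ * b < π) :
    modelCosAngle κ b a (modelSideLength κ a b x) = x := by
  rcases abs_le.1 hx with ⟨hx1, hx2⟩
  rw [modelCosAngle, modelSideLength]
  split_ifs with h1 h2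
  · subst h1
    have hinner : 0 ≤ a^2 + b^2 - 2*a*b*x := by nlinarith [mul_pos h0a h0b, sq_nonneg (a-b)]
    rw [Real.sq_sqrt hinner]
    field_simp
    ring
  · have hs : (0:ℝ) < Real.sqrt κ := Real.sqrt_pos.2 h2
    set A := Real.sqrt κ * a with hAdef
    set B := Real.sqrt κ * b with hBdef
    have hA : 0 < A := by positivity
    have hB : 0 < B := by positivity
    have hsinA : 0 < sin A := Real.sin_pos_of_pos_of_lt_pi hA (ha h2)
    have hsinB : 0 < sin B := Real.sin_pos_of_pos_of_lt_pi hB (hb h2)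
    have hub : cos A * cos B + sin A * sin B * x ≤ 1 := by
      have := Real.cos_sub A B
      have := Real.cos_le_one (A - B)
      nlinarith [mul_pos hsinA hsinB]
    have hlb : -1 ≤ cos A * cos B + sin A * sin B * x := by
      have := Real.cos_add A B
      have := Real.neg_one_le_cos (A + B)
      nlinarith [mul_pos hsinA hsinB]
    rw [mul_div_cancel₀ _ hs.ne']
    rw [Real.cos_arccos hlb hub]
    field_simp
    ring
  · have hk : 0 < -κ := rm_kneg h1 h2
    have hs : (0:ℝ) < Real.sqrt (-κ) := Real.sqrt_pos.2 hk
    set A := Real.sqrt (-κ) * a with hAdef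
    set B := Real.sqrt (-κ) * b with hBdef
    have hA : 0 < A := by positivity
    have hB : 0 < B := by positivity
    have hshA : 0 < sinh A := Real.sinh_pos_iff.2 hA
    have hshB : 0 < sinh B := Real.sinh_pos_iff.2 hB
    have hE : 1 ≤ cosh A * cosh B - sinh A * sinh B * x := by
      have := Real.cosh_sub A B
      have := Real.one_le_cosh (A - B)
      nlinarith [mul_pos hshA hshB]
    rw [mul_div_cancel₀ _ hs.ne']
    rw [rm_cosh_arcosh hE]
    field_simp
    ring

/-- L4: recovering the side from the cosine. -/
lemma msl_mca_inv (h0c : 0 ≤ c) (h0a : 0 < a) (h0b : 0 < b)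
    (ha : 0 < κ → Real.sqrt κ * a < π) (hb : 0 < κ → Real.sqrt κ * b < π)
    (hc : 0 < κ → Real.sqrt κ * c ≤ π) :
    modelSideLength κ a b (modelCosAngle κ a b c) = c := by
  rw [modelCosAngle, modelSideLength]
  split_ifs with h1 h2
  · subst h1
    have h : a^2 + b^2 - 2*a*b*((a^2+b^2-c^2)/(2*a*b)) = c^2 := by
      field_simp; ring
    rw [h, Real.sqrt_sq h0c]
  · have hs : (0:ℝ) < Real.sqrt κ := Real.sqrt_pos.2 h2
    set A := Real.sqrt κ * a with hAdef
    set B := Real.sqrt κ * b with hBdef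
    have hA : 0 < A := by positivity
    have hB : 0 < B := by positivity
    have hsinA : 0 < sin A := Real.sin_pos_of_pos_of_lt_pi hA (ha h2)
    have hsinB : 0 < sin B := Real.sin_pos_of_pos_of_lt_pi hB (hb h2)
    have h : cos A * cos B + sin A * sin B * ((cos (Real.sqrt κ * c) - cos A * cos B)/(sin A * sin B)) = cos (Real.sqrt κ * c) := by
      field_simp; ring
    rw [h, Real.arccos_cos (by positivity) (hc h2)]
    field_simp
  · have hk : 0 < -κ := rm_kneg h1 h2
    have hs : (0:ℝ) < Real.sqrt (-κ) := Real.sqrt_pos.2 hk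
    set A := Real.sqrt (-κ) * a with hAdef
    set B := Real.sqrt (-κ) * b with hBdef
    have hA : 0 < A := by positivity
    have hB : 0 < B := by positivity
    have hshA : 0 < sinh A := Real.sinh_pos_iff.2 hA
    have hshB : 0 < sinh B := Real.sinh_pos_iff.2 hB
    have h : cosh A * cosh B - sinh A * sinh B * ((cosh A * cosh B - cosh (Real.sqrt (-κ) * c))/(sinh A * sinh B)) = cosh (Real.sqrt (-κ) * c) := by
      field_simp; ring
    rw [h, rm_log_arcosh_eq (by positivity)]
    field_simp

/-- L5: the model cosine of an actual triangle lies in `[-1,1]`. -/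
lemma mca_abs_le (h0a : 0 < a) (h0b : 0 < b) (htr1 : |a - b| ≤ c) (htr2 : c ≤ a + b)
    (ha : 0 < κ → Real.sqrt κ * a < π) (hb : 0 < κ → Real.sqrt κ * b < π)
    (hc : 0 < κ → Real.sqrt κ * c ≤ π)
    (hper : 0 < κ → Real.sqrt κ * (a + b + c) ≤ 2*π) :
    |modelCosAngle κ a b c| ≤ 1 := by
  have h0c : 0 ≤ c := le_trans (abs_nonneg _) htr1
  rw [modelCosAngle]
  split_ifs with h1 h2
  · subst h1
    rw [abs_div, abs_of_pos (by positivity : (0:ℝ) < 2*a*b), div_le_one (by positivity)]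
    have := pow_le_pow_left₀ (abs_nonneg (a-b)) htr1 2
    rw [sq_abs] at this
    rw [abs_le]
    constructor <;> nlinarith
  · have hs : (0:ℝ) < Real.sqrt κ := Real.sqrt_pos.2 h2
    set A := Real.sqrt κ * a with hAdef
    set B := Real.sqrt κ * b with hBdef
    set C := Real.sqrt κ * c with hCdef
    have hA : 0 < A := by positivity
    have hB : 0 < B := by positivity
    have hC : 0 ≤ C := by positivity
    have hsinA : 0 < sin A := Real.sin_pos_of_pos_of_lt_pi hA (ha h2)
    have hsinB : 0 < sin B := Real.sin_pos_of_pos_of_lt_pi hB (hb h2)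
    have habs : |A - B| ≤ C := by
      have : A - B = Real.sqrt κ * (a - b) := by ring
      rw [this, abs_mul, abs_of_nonneg hs.le]
      exact mul_le_mul_of_nonneg_left htr1 hs.le
    have hub : cos C ≤ cos A * cos B + sin A * sin B := by
      have h' : cos C ≤ cos |A - B| :=
        Real.cos_le_cos_of_nonneg_of_le_pi (abs_nonneg _) (hc h2) habs
      rw [Real.cos_abs, Real.cos_sub] at h'
      linarith
    have hlb : cos A * cos B - sin A * sin B ≤ cos C := by
      have hid := Real.cos_add A B
      rcases le_or_gt (A + B) π with hABπ | hABπ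
      · have h' : cos (A + B) ≤ cos C := by
          apply Real.cos_le_cos_of_nonneg_of_le_pi hC hABπ
          have : C ≤ Real.sqrt κ * (a+b) := mul_le_mul_of_nonneg_left htr2 hs.le
          rw [mul_add] at this
          linarith
        linarith
      · have h2π : cos (A + B) = cos (2*π - (A+B)) := (Real.cos_two_pi_sub _).symm
        have h' : cos (2*π - (A+B)) ≤ cos C := by
          apply Real.cos_le_cos_of_nonneg_of_le_pi hC (by linarith)
          have := hper h2
          rw [mul_add, mul_add] at this
          linarith
        linarith
    rw [abs_div, abs_of_pos (mul_pos hsinA hsinB), div_le_one (mul_pos hsinA hsinB), abs_le]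
    constructor <;> linarith
  · have hk : 0 < -κ := rm_kneg h1 h2
    have hs : (0:ℝ) < Real.sqrt (-κ) := Real.sqrt_pos.2 hk
    set A := Real.sqrt (-κ) * a with hAdef
    set B := Real.sqrt (-κ) * b with hBdef
    set C := Real.sqrt (-κ) * c with hCdef
    have hA : 0 < A := by positivity
    have hB : 0 < B := by positivity
    have hC : 0 ≤ C := by positivity
    have hshA : 0 < sinh A := Real.sinh_pos_iff.2 hA
    have hshB : 0 < sinh B := Real.sinh_pos_iff.2 hB
    have habs : |A - B| ≤ C := by
      have : A - B = Real.sqrt (-κ) * (a - b) := by ring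
      rw [this, abs_mul, abs_of_nonneg hs.le]
      exact mul_le_mul_of_nonneg_left htr1 hs.le
    have hub : cosh C ≤ cosh A * cosh B + sinh A * sinh B := by
      have h' : cosh C ≤ cosh (A + B) := by
        rw [Real.cosh_le_cosh, abs_of_nonneg hC, abs_of_nonneg (by positivity : (0:ℝ) ≤ A + B)]
        have : C ≤ Real.sqrt (-κ) * (a+b) := mul_le_mul_of_nonneg_left htr2 hs.le
        rw [mul_add] at this
        linarith
      rw [Real.cosh_add] at h'
      linarith
    have hlb : cosh A * cosh B - sinh A * sinh B ≤ cosh C := by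
      have h' : cosh (A - B) ≤ cosh C := by
        rw [Real.cosh_le_cosh, abs_of_nonneg hC]
        exact habs
      rw [Real.cosh_sub] at h'
      linarith
    rw [abs_div, abs_of_pos (mul_pos hshA hshB), div_le_one (mul_pos hshA hshB), abs_le]
    constructor <;> linarith

/-- L5b: for nonpositive curvature, cosine bound from one triangle inequality. -/
lemma mca_le_one_of (hκ : κ ≤ 0) (h0a : 0 < a) (h0b : 0 < b) (hw : |a - b| ≤ w) :
    modelCosAngle κ a b w ≤ 1 := by
  have h0w : 0 ≤ w := le_trans (abs_nonneg _) hw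
  rw [modelCosAngle]
  split_ifs with h1 h2
  · subst h1
    rw [div_le_one (by positivity)]
    have := pow_le_pow_left₀ (abs_nonneg (a-b)) hw 2
    rw [sq_abs] at this
    nlinarith
  · linarith
  · have hk : 0 < -κ := rm_kneg h1 h2
    have hs : (0:ℝ) < Real.sqrt (-κ) := Real.sqrt_pos.2 hk
    have hshA : 0 < sinh (Real.sqrt (-κ) * a) := Real.sinh_pos_iff.2 (by positivity)
    have hshB : 0 < sinh (Real.sqrt (-κ) * b) := Real.sinh_pos_iff.2 (by positivity)
    rw [div_le_one (mul_pos hshA hshB)]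
    have h' : cosh (Real.sqrt (-κ) * a - Real.sqrt (-κ) * b) ≤ cosh (Real.sqrt (-κ) * w) := by
      rw [Real.cosh_le_cosh, abs_of_nonneg (by positivity : (0:ℝ) ≤ Real.sqrt (-κ) * w)]
      calc |Real.sqrt (-κ) * a - Real.sqrt (-κ) * b| = Real.sqrt (-κ) * |a - b| := by
            rw [← mul_sub, abs_mul, abs_of_nonneg hs.le]
        _ ≤ Real.sqrt (-κ) * w := mul_le_mul_of_nonneg_left hw hs.le
    rw [Real.cosh_sub] at h'
    linarith

end modelLemmas2

section scaling
open Real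

variable {κ a b x t d' : ℝ}

/-- L6 for κ ≤ 0 : the model distance between points at parameter `t` is at most that at 1. -/
lemma msl_scale_nonpos (hκ : κ ≤ 0) (h0a : 0 ≤ a) (h0b : 0 ≤ b) (hx : |x| ≤ 1)
    (ht0 : 0 ≤ t) (ht1 : t ≤ 1) :
    modelSideLength κ (t*a) (t*b) x ≤ modelSideLength κ a b x := by
  rcases abs_le.1 hx with ⟨hx1, hx2⟩
  rw [modelSideLength, modelSideLength]
  split_ifs with h1 h2
  · apply Real.sqrt_le_sqrt
    have h : (t*a)^2 + (t*b)^2 - 2*(t*a)*(t*b)*x = t^2 * (a^2+b^2-2*a*b*x) := by ring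
    rw [h]
    have hI : 0 ≤ a^2+b^2-2*a*b*x := by nlinarith [mul_nonneg h0a h0b, sq_nonneg (a-b)]
    have ht2 : t^2 ≤ 1 := by nlinarith
    calc t^2 * (a^2+b^2-2*a*b*x) ≤ 1 * (a^2+b^2-2*a*b*x) :=
          mul_le_mul_of_nonneg_right ht2 hI
      _ = a^2+b^2-2*a*b*x := one_mul _
  · linarith
  · have hk : 0 < -κ := rm_kneg h1 h2
    have hs : (0:ℝ) < Real.sqrt (-κ) := Real.sqrt_pos.2 hk
    apply (div_le_div_iff_of_pos_right hs).2
    set A := Real.sqrt (-κ) * a with hAdef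
    set B := Real.sqrt (-κ) * b with hBdef
    have hA : 0 ≤ A := mul_nonneg hs.le h0a
    have hB : 0 ≤ B := mul_nonneg hs.le h0b
    have e1 : Real.sqrt (-κ) * (t*a) = t * A := by rw [hAdef]; ring
    have e2 : Real.sqrt (-κ) * (t*b) = t * B := by rw [hBdef]; ring
    rw [e1, e2, rm_cosh_mul_sub (t*A) (t*B) x, rm_cosh_mul_sub A B x]
    have hta : t*A + t*B = t*(A+B) := by ring
    have htb : t*A - t*B = t*(A-B) := by ring
    rw [hta, htb]
    have hc1 : cosh (t*(A+B)) ≤ cosh (A+B) := by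
      rw [Real.cosh_le_cosh, abs_mul, abs_of_nonneg ht0]
      nlinarith [abs_nonneg (A+B)]
    have hc2 : cosh (t*(A-B)) ≤ cosh (A-B) := by
      rw [Real.cosh_le_cosh, abs_mul, abs_of_nonneg ht0]
      nlinarith [abs_nonneg (A-B)]
    have hE1 : 1 ≤ ((1-x) * cosh (t*(A+B)) + (1+x) * cosh (t*(A-B))) / 2 := by
      have := Real.one_le_cosh (t*(A+B))
      have := Real.one_le_cosh (t*(A-B))
      nlinarith
    exact rm_arcosh_mono hE1 (by nlinarith)

set_option maxHeartbeats 800000 in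
/-- L6 for κ > 0, quantitative version with margin `d'`. -/
lemma msl_scale_pos (hκ : 0 < κ) (hd' : 0 < d') (h0a : 0 ≤ a) (h0b : 0 ≤ b)
    (hA' : Real.sqrt κ * a ≤ π - d') (hB' : Real.sqrt κ * b ≤ π - d')
    (hx : |x| ≤ 1) (ht0 : 0 ≤ t) (ht1 : t ≤ 1) :
    modelSideLength κ (t*a) (t*b) x ≤
      (π/2) * Real.sqrt (max 1 (2 / (1 - Real.cos (min (2*d') π)))) *
        modelSideLength κ a b x := by
  rcases abs_le.1 hx with ⟨hx1, hx2⟩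
  have hs : (0:ℝ) < Real.sqrt κ := Real.sqrt_pos.2 hκ
  have hπ := Real.pi_pos
  set c₀ : ℝ := 1 - Real.cos (min (2*d') π) with hc₀def
  have hmin0 : 0 < min (2*d') π := lt_min (by linarith) hπ
  have hminπ : min (2*d') π ≤ π := min_le_right _ _
  have hc₀ : 0 < c₀ := by
    rw [hc₀def, rm_one_sub_cos]
    have : 0 < sin (min (2*d') π / 2) :=
      Real.sin_pos_of_pos_of_lt_pi (by linarith) (by linarith)
    positivity
  set Cp : ℝ := max 1 (2 / c₀) with hCpdef
  have hCp1 : 1 ≤ Cp := le_max_left _ _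
  have hCp0 : 0 < Cp := lt_of_lt_of_le one_pos hCp1
  rw [modelSideLength, modelSideLength, if_neg hκ.ne', if_neg hκ.ne', if_pos hκ, if_pos hκ]
  set A := Real.sqrt κ * a with hAdef
  set B := Real.sqrt κ * b with hBdef
  have hA : 0 ≤ A := mul_nonneg hs.le h0a
  have hB : 0 ≤ B := mul_nonneg hs.le h0b
  have e1 : Real.sqrt κ * (t*a) = t * A := by rw [hAdef]; ring
  have e2 : Real.sqrt κ * (t*b) = t * B := by rw [hBdef]; ring
  rw [e1, e2, rm_cos_mul_add (t*A) (t*B) x, rm_cos_mul_add A B x]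
  have hta : t*A + t*B = t*(A+B) := by ring
  have htb : t*A - t*B = t*(A-B) := by ring
  rw [hta, htb]
  set Et : ℝ := ((1+x) * cos (t*(A-B)) + (1-x) * cos (t*(A+B))) / 2 with hEtdef
  set E1 : ℝ := ((1+x) * cos (A-B) + (1-x) * cos (A+B)) / 2 with hE1def
  have hEt_mem : -1 ≤ Et ∧ Et ≤ 1 := by
    constructor <;>
      [nlinarith [Real.neg_one_le_cos (t*(A-B)), Real.neg_one_le_cos (t*(A+B))];
       nlinarith [Real.cos_le_one (t*(A-B)), Real.cos_le_one (t*(A+B))]]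
  have hE1_mem : -1 ≤ E1 ∧ E1 ≤ 1 := by
    constructor <;>
      [nlinarith [Real.neg_one_le_cos (A-B), Real.neg_one_le_cos (A+B)];
       nlinarith [Real.cos_le_one (A-B), Real.cos_le_one (A+B)]]
  -- key: 1 - Et ≤ Cp * (1 - E1)
  have hD : 1 - cos (t*(A-B)) ≤ 1 - cos (A-B) := by
    have habsAB : |A-B| ≤ π := by
      rw [abs_le]; constructor <;> nlinarith
    have : cos (A-B) ≤ cos (t*(A-B)) := by
      rw [← Real.cos_abs (A-B), ← Real.cos_abs (t*(A-B))]
      apply Real.cos_le_cos_of_nonneg_of_le_pi (abs_nonneg _) habsAB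
      rw [abs_mul, abs_of_nonneg ht0]
      nlinarith [abs_nonneg (A-B)]
    linarith
  have hS : 1 - cos (t*(A+B)) ≤ Cp * (1 - cos (A+B)) := by
    rcases le_or_gt (A+B) π with hcase | hcase
    · have : cos (A+B) ≤ cos (t*(A+B)) := by
        apply Real.cos_le_cos_of_nonneg_of_le_pi (by positivity) hcase
        nlinarith
      have h1 : 1 - cos (t*(A+B)) ≤ 1 - cos (A+B) := by linarith
      have h2 : 0 ≤ 1 - cos (A+B) := by linarith [Real.cos_le_one (A+B)]
      nlinarith
    · have hSub : cos (A+B) ≤ Real.cos (min (2*d') π) := by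
        have h2π : cos (A+B) = cos (2*π - (A+B)) := (Real.cos_two_pi_sub _).symm
        rw [h2π]
        apply Real.cos_le_cos_of_nonneg_of_le_pi hmin0.le (by linarith)
        -- min (2d') π ≤ 2π - (A+B)
        have hsum : A + B ≤ 2*π - 2*d' := by linarith [hA', hB']
        have : 2*d' ≤ 2*π - (A+B) := by linarith
        exact le_trans (min_le_left _ _) this
      have hlow : c₀ ≤ 1 - cos (A+B) := by rw [hc₀def]; linarith
      have h2 : 1 - cos (t*(A+B)) ≤ 2 := by linarith [Real.neg_one_le_cos (t*(A+B))]
      have hCp2 : 2/c₀ ≤ Cp := le_max_right _ _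
      calc 1 - cos (t*(A+B)) ≤ 2 := h2
        _ = (2/c₀) * c₀ := by field_simp
        _ ≤ Cp * (1 - cos (A+B)) := by
            apply mul_le_mul hCp2 hlow hc₀.le hCp0.le
  have hkey : 1 - Et ≤ Cp * (1 - E1) := by
    have w1 : 0 ≤ 1 + x := by linarith
    have w2 : 0 ≤ 1 - x := by linarith
    have hD2 : 0 ≤ 1 - cos (A-B) := by linarith [Real.cos_le_one (A-B)]
    have hS2 : 0 ≤ 1 - cos (A+B) := by linarith [Real.cos_le_one (A+B)]
    rw [hEtdef, hE1def]
    have expand : 1 - ((1+x) * cos (t*(A-B)) + (1-x) * cos (t*(A+B))) / 2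
        = ((1+x) * (1 - cos (t*(A-B))) + (1-x) * (1 - cos (t*(A+B)))) / 2 := by ring
    have expand1 : 1 - ((1+x) * cos (A-B) + (1-x) * cos (A+B)) / 2
        = ((1+x) * (1 - cos (A-B)) + (1-x) * (1 - cos (A+B))) / 2 := by ring
    rw [expand, expand1]
    have t1 : (1+x) * (1 - cos (t*(A-B))) ≤ (1+x) * (Cp * (1 - cos (A-B))) := by
      apply mul_le_mul_of_nonneg_left _ w1
      nlinarith
    have t2 : (1-x) * (1 - cos (t*(A+B))) ≤ (1-x) * (Cp * (1 - cos (A+B))) := by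
      exact mul_le_mul_of_nonneg_left hS w2
    calc ((1+x) * (1 - cos (t*(A-B))) + (1-x) * (1 - cos (t*(A+B)))) / 2
        ≤ ((1+x) * (Cp * (1 - cos (A-B))) + (1-x) * (Cp * (1 - cos (A+B)))) / 2 := by linarith
      _ = Cp * (((1+x) * (1 - cos (A-B)) + (1-x) * (1 - cos (A+B))) / 2) := by ring
  -- combine via arccos bounds
  have harc1 : arccos Et ≤ π * Real.sqrt ((1-Et)/2) := rm_arccos_le hEt_mem.1 hEt_mem.2
  have harc2 : Real.sqrt (2*(1-E1)) ≤ arccos E1 := rm_le_arccos hE1_mem.1 hE1_mem.2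
  have hstep : π * Real.sqrt ((1-Et)/2) ≤ (π/2) * Real.sqrt Cp * Real.sqrt (2*(1-E1)) := by
    have h1 : Real.sqrt ((1-Et)/2) ≤ Real.sqrt (Cp * (1-E1) / 2) :=
      Real.sqrt_le_sqrt (by linarith)
    have h2 : (π/2) * Real.sqrt Cp * Real.sqrt (2*(1-E1))
        = π * (Real.sqrt Cp * Real.sqrt (2*(1-E1)) / 2) := by ring
    have h3 : Real.sqrt Cp * Real.sqrt (2*(1-E1)) = Real.sqrt (Cp * (2*(1-E1))) :=
      (Real.sqrt_mul hCp0.le _).symm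
    have h4 : Real.sqrt (Cp * (1-E1) / 2) ≤ Real.sqrt (Cp * (2*(1-E1))) / 2 := by
      rw [show Real.sqrt (Cp * (2*(1-E1))) = Real.sqrt 4 * Real.sqrt (Cp * (1-E1)/2) by
        rw [← Real.sqrt_mul (by norm_num : (0:ℝ) ≤ 4)]
        congr 1
        ring, show Real.sqrt 4 = 2 by
          rw [show (4:ℝ) = 2^2 by norm_num, Real.sqrt_sq (by norm_num : (0:ℝ) ≤ 2)]]
      linarith [Real.sqrt_nonneg (Cp * (1-E1)/2)]
    rw [h2, h3]
    have := mul_le_mul_of_nonneg_left (le_trans h1 h4) hπ.le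
    linarith
  have hfinal : arccos Et ≤ (π/2) * Real.sqrt Cp * arccos E1 := by
    calc arccos Et ≤ π * Real.sqrt ((1-Et)/2) := harc1
      _ ≤ (π/2) * Real.sqrt Cp * Real.sqrt (2*(1-E1)) := hstep
      _ ≤ (π/2) * Real.sqrt Cp * arccos E1 := by
          apply mul_le_mul_of_nonneg_left harc2
          positivity
  calc arccos Et / Real.sqrt κ ≤ ((π/2) * Real.sqrt Cp * arccos E1) / Real.sqrt κ :=
        (div_le_div_iff_of_pos_right hs).2 hfinal
    _ = (π/2) * Real.sqrt Cp * (arccos E1 / Real.sqrt κ) := by ring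

end scaling

section core
open Real

variable {Y : Type*} [MetricSpace Y] {κ : ℝ}

lemma rm_geod_reverse {γ : ℝ → Y} {x y : Y} (h : IsGeodesicParam γ x y) :
    IsGeodesicParam (fun s => γ (dist x y - s)) y x := by
  obtain ⟨h0, h1, hd⟩ := h
  refine ⟨by simpa using h1, ?_, ?_⟩
  · rw [dist_comm]; simpa using h0
  · intro s hs t ht
    rw [dist_comm y x] at hs ht
    have h1 := hd (dist x y - s) ⟨by linarith [hs.2], by linarith [hs.1]⟩
      (dist x y - t) ⟨by linarith [ht.2], by linarith [ht.1]⟩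
    simpa [abs_sub_comm] using h1

set_option maxHeartbeats 1600000 in
/-- the fundamental CAT comparison, packaged: common-vertex convexity estimate. -/
lemma rm_core (hY : IsCATSpace κ Y) {C : ℝ} (hC1 : 1 ≤ C)
    (p q r : Y) (γ sg : ℝ → Y) (hγ : IsGeodesicParam γ p q) (hsg : IsGeodesicParam sg p r)
    (hper : ENNReal.ofReal (dist p q + dist q r + dist r p) < 2 * modelDiam κ)
    (hpq : 0 < κ → Real.sqrt κ * dist p q < π)
    (hpr : 0 < κ → Real.sqrt κ * dist p r < π)
    (hqr : 0 < κ → Real.sqrt κ * dist q r ≤ π)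
    (hper2 : 0 < κ → Real.sqrt κ * (dist p q + dist q r + dist r p) ≤ 2*π)
    (hscale : ∀ x u : ℝ, |x| ≤ 1 → 0 ≤ u → u ≤ 1 →
      modelSideLength κ (u * dist p q) (u * dist p r) x ≤
        C * modelSideLength κ (dist p q) (dist p r) x)
    (t : ℝ) (ht0 : 0 ≤ t) (ht1 : t ≤ 1) :
    dist (γ (t * dist p q)) (sg (t * dist p r)) ≤ C * dist q r := by
  set a := dist p q with hadef
  set b := dist p r with hbdef
  set c := dist q r with hcdef
  have h0a : 0 ≤ a := dist_nonneg
  have h0b : 0 ≤ b := dist_nonneg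
  have h0c : 0 ≤ c := dist_nonneg
  rcases eq_or_lt_of_le ht0 with rfl | ht0'
  · have e1 : (0:ℝ) * a = 0 := by ring
    have e2 : (0:ℝ) * b = 0 := by ring
    rw [e1, e2, hγ.1, hsg.1, dist_self]
    positivity
  rcases eq_or_lt_of_le h0a with ha0 | ha0
  · -- a = 0 : p = q
    have hpq' : p = q := by rwa [← dist_eq_zero, ← hadef, eq_comm]
    have e1 : t * a = 0 := by rw [← ha0]; ring
    rw [e1, hγ.1]
    have hsgd : dist (sg (t*b)) (sg 0) = t * b := by
      have := hsg.2.2 (t*b) ⟨by nlinarith, by nlinarith⟩ 0 ⟨le_refl _, h0b⟩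
      rw [this, sub_zero, abs_of_nonneg (by nlinarith)]
    rw [hsg.1] at hsgd
    rw [dist_comm]
    have hbc : b = c := by rw [hbdef, hcdef, hpq']
    nlinarith
  rcases eq_or_lt_of_le h0b with hb0 | hb0
  · -- b = 0 : p = r
    have hpr' : p = r := by rwa [← dist_eq_zero, ← hbdef, eq_comm]
    have e1 : t * b = 0 := by rw [← hb0]; ring
    rw [e1, hsg.1]
    have hγd : dist (γ (t*a)) (γ 0) = t * a := by
      have := hγ.2.2 (t*a) ⟨by nlinarith, by nlinarith⟩ 0 ⟨le_refl _, h0a⟩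
      rw [this, sub_zero, abs_of_nonneg (by nlinarith)]
    rw [hγ.1] at hγd
    have hac : a = c := by rw [hadef, hcdef, ← hpr', dist_comm]
    nlinarith
  -- main case
  have hta_mem : t * a ∈ Set.Icc (0:ℝ) a := ⟨by nlinarith, by nlinarith⟩
  have htb_mem : t * b ∈ Set.Icc (0:ℝ) b := ⟨by nlinarith, by nlinarith⟩
  set x := γ (t * a) with hxdef
  -- distances from p and q to x
  have dpx : dist p x = t * a := by
    have := hγ.2.2 (t*a) hta_mem 0 ⟨le_refl _, h0a⟩
    rw [hγ.1] at this
    rw [dist_comm, this, sub_zero, abs_of_nonneg (by nlinarith)]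
  have dqx : dist q x = (1-t) * a := by
    have := hγ.2.2 (t*a) hta_mem a ⟨h0a, le_refl _⟩
    rw [hγ.2.1] at this
    rw [dist_comm, this, abs_of_nonpos (by nlinarith)]
    ring
  have drx_le : dist r x ≤ c + (1-t)*a := by
    calc dist r x ≤ dist r q + dist q x := dist_triangle _ _ _
      _ = c + (1-t)*a := by rw [dist_comm r q, ← hcdef, dqx]
  have drx_ge : |b - t*a| ≤ dist r x := by
    have := abs_dist_sub_le r x p
    rw [dist_comm r p, ← hbdef, dist_comm x p, dpx] at this
    exact this
  -- triangle inequalities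
  have htr1 : |a - b| ≤ c := by
    have := abs_dist_sub_le q r p
    rw [dist_comm q p, ← hadef, dist_comm r p, ← hbdef, ← hcdef] at this
    exact this
  have htr2 : c ≤ a + b := by
    have := dist_triangle q p r
    rw [dist_comm q p, ← hadef, ← hbdef, ← hcdef] at this
    linarith
  have hrp : dist r p = b := by rw [hbdef]; exact dist_comm r p
  have hper2' : 0 < κ → Real.sqrt κ * (a + b + c) ≤ 2*π := by
    intro hκ
    have := hper2 hκ
    rw [hrp] at this
    linarith
  set x₀ := modelCosAngle κ a b c with hx₀def
  have hx₀ : |x₀| ≤ 1 := by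
    rw [hx₀def]
    exact mca_abs_le ha0 hb0 htr1 htr2 hpq hpr hqr hper2'
  set W := modelSideLength κ (t*a) b x₀ with hWdef
  -- step 1 : comparison in triangle (p,q,r)
  have h1 : dist x r ≤ W := by
    have := hY.2.2 p q r γ hγ hper (t*a) hta_mem
    rw [← hadef, ← hbdef, ← hcdef, ← hx₀def, ← hxdef] at this
    exact this
  -- step 2 : comparison in triangle (p,r,x)
  have hper' : ENNReal.ofReal (dist p r + dist r x + dist x p) < 2 * modelDiam κ := by
    apply lt_of_le_of_lt _ hper
    apply ENNReal.ofReal_le_ofReal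
    rw [dist_comm x p, dpx, ← hbdef]
    have : dist r x ≤ c + (1-t)*a := drx_le
    rw [dist_comm r p]
    linarith
  have h2 : dist (sg (t*b)) x ≤
      modelSideLength κ (t*b) (t*a)
        (modelCosAngle κ b (t*a) (dist r x)) := by
    have := hY.2.2 p r x sg hsg hper' (t*b) htb_mem
    rw [← hbdef, dpx] at this
    exact this
  -- step 3 : monotonicity chain
  have hWπ : 0 < κ → Real.sqrt κ * W ≤ π := fun hκ => msl_le_pi hκ _ _ _
  have h3 : x₀ ≤ modelCosAngle κ b (t*a) (dist r x) := by
    have hmono : modelCosAngle κ b (t*a) W ≤ modelCosAngle κ b (t*a) (dist r x) := by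
      apply mca_antitone hb0 (by nlinarith) dist_nonneg (by rw [dist_comm] at h1; exact h1)
        hpr (fun hκ => by nlinarith [hpq hκ, Real.sqrt_nonneg κ, mul_nonneg (Real.sqrt_nonneg κ) h0a]) hWπ
    have hinv : modelCosAngle κ b (t*a) W = x₀ := by
      rw [hWdef]
      exact mca_msl_inv (by nlinarith) hb0 hx₀
        (fun hκ => by nlinarith [hpq hκ, Real.sqrt_nonneg κ, mul_nonneg (Real.sqrt_nonneg κ) h0a]) hpr
    rw [← hinv]
    exact hmono
  have h4 : modelSideLength κ (t*b) (t*a) (modelCosAngle κ b (t*a) (dist r x)) ≤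
      modelSideLength κ (t*b) (t*a) x₀ := by
    apply msl_antitone (by nlinarith) (by nlinarith) h3
    · intro hκneg
      apply mca_le_one_of hκneg.le hb0 (by nlinarith)
      have hflip := drx_ge
      rw [abs_sub_comm] at hflip
      first
        | exact drx_ge
        | exact hflip
    · intro hκ
      nlinarith [hpr hκ, Real.sqrt_nonneg κ, mul_nonneg (Real.sqrt_nonneg κ) h0b]
    · intro hκ
      nlinarith [hpq hκ, Real.sqrt_nonneg κ, mul_nonneg (Real.sqrt_nonneg κ) h0a]
  have h5 : modelSideLength κ (t*b) (t*a) x₀ = modelSideLength κ (t*a) (t*b) x₀ :=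
    msl_symm κ _ _ _
  have h6 : modelSideLength κ (t*a) (t*b) x₀ ≤ C * modelSideLength κ a b x₀ :=
    hscale x₀ t hx₀ ht0 ht1
  have h7 : modelSideLength κ a b x₀ = c := by
    rw [hx₀def]
    exact msl_mca_inv h0c ha0 hb0 hpq hpr hqr
  calc dist (γ (t*a)) (sg (t*b)) = dist (sg (t*b)) x := by rw [hxdef, dist_comm]
    _ ≤ modelSideLength κ (t*b) (t*a) (modelCosAngle κ b (t*a) (dist r x)) := h2
    _ ≤ modelSideLength κ (t*b) (t*a) x₀ := h4
    _ = modelSideLength κ (t*a) (t*b) x₀ := h5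
    _ ≤ C * modelSideLength κ a b x₀ := h6
    _ = C * c := by rw [h7]

end core

section variation
open Real

variable {Y : Type*} [MetricSpace Y]

lemma rm_block_sum {M : Type*} [AddCommMonoid M] (g : ℕ → M) (K : ℕ) :
    ∀ n : ℕ, ∑ j ∈ Finset.range (n*K), g j =
      ∑ i ∈ Finset.range n, ∑ r ∈ Finset.range K, g (i*K + r) := by
  intro n
  induction n with
  | zero => simp
  | succ n ih =>
    have h : (n+1)*K = n*K + K := by ring
    rw [h, Finset.sum_range_add, ih, Finset.sum_range_succ]

/-- refinement bound for the variation of a curve satisfying a local two-curve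
Lipschitz estimate. -/
lemma rm_evar_bound (h f₀ f₁ : unitInterval → Y) (L ε : ℝ) (hL : 0 ≤ L) (hε : 0 < ε)
    (key : ∀ a b : unitInterval, dist a b ≤ ε →
      dist (h a) (h b) ≤ L * (dist (f₀ a) (f₀ b) + dist (f₁ a) (f₁ b))) :
    eVariationOn h Set.univ ≤
      ENNReal.ofReal L * (eVariationOn f₀ Set.univ + eVariationOn f₁ Set.univ) := by
  rw [eVariationOn]
  apply iSup_le
  rintro ⟨n, u, hu, -⟩
  obtain ⟨K, hK⟩ := exists_nat_gt (1/ε)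
  have hK0 : 0 < K := by
    by_contra hc
    push_neg at hc
    interval_cases K
    simp only [Nat.cast_zero] at hK
    have : (0:ℝ) < 1/ε := by positivity
    linarith
  have hK0' : (0:ℝ) < (K:ℝ) := by exact_mod_cast hK0
  have hKε : 1/(K:ℝ) ≤ ε := by
    rw [div_le_iff₀ hK0']
    rw [div_lt_iff₀ hε] at hK
    nlinarith
  set v : ℕ → ℝ := fun j =>
    (u (j/K) : ℝ) + ((j % K : ℕ) : ℝ)/(K:ℝ) * ((u (j/K + 1) : ℝ) - (u (j/K) : ℝ)) with hvdef
  have hdiff : ∀ i : ℕ, (0:ℝ) ≤ (u (i+1) : ℝ) - (u i : ℝ) := by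
    intro i
    exact sub_nonneg.2 (hu (Nat.le_succ i))
  have hudiff1 : ∀ i : ℕ, (u (i+1) : ℝ) - (u i : ℝ) ≤ 1 := by
    intro i
    have h1 := (u (i+1)).2.2
    have h2 := (u i).2.1
    linarith
  have hvmem : ∀ j, v j ∈ Set.Icc (0:ℝ) 1 := by
    intro j
    have hmod : (j % K : ℕ) < K := Nat.mod_lt _ hK0
    have hfrac0 : (0:ℝ) ≤ ((j % K : ℕ) : ℝ)/(K:ℝ) := by positivity
    have hfrac1 : ((j % K : ℕ) : ℝ)/(K:ℝ) ≤ 1 := by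
      rw [div_le_one hK0']
      exact_mod_cast hmod.le
    constructor
    · have h1 := (u (j/K)).2.1
      have := mul_nonneg hfrac0 (hdiff (j/K))
      simp only [hvdef]
      linarith
    · have h1 := (u (j/K + 1)).2.2
      have h2 := hdiff (j/K)
      have h4 : ((j % K : ℕ) : ℝ)/(K:ℝ) * ((u (j/K + 1) : ℝ) - (u (j/K) : ℝ))
          ≤ 1 * ((u (j/K + 1) : ℝ) - (u (j/K) : ℝ)) := mul_le_mul_of_nonneg_right hfrac1 h2
      simp only [hvdef]
      linarith
  set w : ℕ → unitInterval := fun j => ⟨v j, hvmem j⟩ with hwdef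
  have hblock : ∀ i : ℕ, w (i*K) = u i := by
    intro i
    apply Subtype.ext
    have hdiv : (i*K)/K = i := Nat.mul_div_cancel i hK0
    have hmod : (i*K) % K = 0 := Nat.mul_mod_left i K
    simp only [hwdef, hvdef, hdiv, hmod]
    simp
  have hstep : ∀ j : ℕ, 0 ≤ v (j+1) - v j ∧ v (j+1) - v j ≤ 1/(K:ℝ) := by
    intro j
    have hmod : (j % K : ℕ) < K := Nat.mod_lt _ hK0
    have hrep : K * (j/K) + j % K = j := Nat.div_add_mod j K
    set q := j/K with hqdef
    set r := j % K with hrdef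
    have hd := hdiff q
    have hd1 := hudiff1 q
    rcases Nat.lt_or_ge (r + 1) K with hcase | hcase
    · have hj1 : j + 1 = K * q + (r+1) := by omega
      have hdiv : (j+1)/K = q := by
        rw [hj1, Nat.mul_add_div hK0, Nat.div_eq_of_lt hcase, Nat.add_zero]
      have hmod1 : (j+1) % K = r + 1 := by
        rw [hj1, Nat.mul_add_mod, Nat.mod_eq_of_lt hcase]
      have hv1 : v (j+1) = (u q : ℝ) + ((r:ℝ)+1)/(K:ℝ) * ((u (q+1) : ℝ) - (u q : ℝ)) := by
        simp only [hvdef, hdiv, hmod1]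
        push_cast
        ring
      have hv0 : v j = (u q : ℝ) + (r:ℝ)/(K:ℝ) * ((u (q+1) : ℝ) - (u q : ℝ)) := by
        simp only [hvdef, ← hqdef, ← hrdef]
      rw [hv1, hv0]
      have hsimp : (u q : ℝ) + ((r:ℝ)+1)/(K:ℝ) * ((u (q+1) : ℝ) - (u q : ℝ))
          - ((u q : ℝ) + (r:ℝ)/(K:ℝ) * ((u (q+1) : ℝ) - (u q : ℝ)))
          = 1/(K:ℝ) * ((u (q+1) : ℝ) - (u q : ℝ)) := by
        field_simp
        ring
      rw [hsimp]
      refine ⟨by positivity, ?_⟩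
      calc 1/(K:ℝ) * ((u (q+1) : ℝ) - (u q : ℝ)) ≤ 1/(K:ℝ) * 1 :=
            mul_le_mul_of_nonneg_left hd1 (by positivity)
        _ = 1/(K:ℝ) := mul_one _
    · have hrK : r + 1 = K := by omega
      have hj1 : j + 1 = K * (q + 1) := by
        rw [Nat.mul_add, Nat.mul_one, ← hrep]
        omega
      have hdiv : (j+1)/K = q + 1 := by rw [hj1]; exact Nat.mul_div_cancel_left _ hK0
      have hmod1 : (j+1) % K = 0 := by rw [hj1]; exact Nat.mul_mod_right K _
      have hv1 : v (j+1) = (u (q+1) : ℝ) := by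
        simp only [hvdef, hdiv, hmod1]
        simp
      have hv0 : v j = (u q : ℝ) + (r:ℝ)/(K:ℝ) * ((u (q+1) : ℝ) - (u q : ℝ)) := by
        simp only [hvdef, ← hqdef, ← hrdef]
      rw [hv1, hv0]
      have hr' : (r:ℝ) = (K:ℝ) - 1 := by
        have : (r:ℝ) + 1 = (K:ℝ) := by exact_mod_cast congrArg (Nat.cast : ℕ → ℝ) hrK
        linarith
      rw [hr']
      have hsimp : (u (q+1) : ℝ) - ((u q : ℝ) + ((K:ℝ)-1)/(K:ℝ) * ((u (q+1) : ℝ) - (u q : ℝ)))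
          = 1/(K:ℝ) * ((u (q+1) : ℝ) - (u q : ℝ)) := by
        field_simp
        ring
      rw [hsimp]
      refine ⟨by positivity, ?_⟩
      calc 1/(K:ℝ) * ((u (q+1) : ℝ) - (u q : ℝ)) ≤ 1/(K:ℝ) * 1 :=
            mul_le_mul_of_nonneg_left hd1 (by positivity)
        _ = 1/(K:ℝ) := mul_one _
  have hwmono : Monotone w := by
    apply monotone_nat_of_le_succ
    intro j
    have := (hstep j).1
    rw [hwdef, Subtype.mk_le_mk]
    linarith
  have hgap : ∀ j, dist (w (j+1)) (w j) ≤ ε := by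
    intro j
    have h1 := (hstep j).1
    have h2 := (hstep j).2
    rw [Subtype.dist_eq]
    simp only [hwdef]
    rw [Real.dist_eq, abs_of_nonneg (by linarith)]
    exact h2.trans hKε
  -- the per-block triangle inequality
  have hperblock : ∀ i : ℕ, edist (h (u (i+1))) (h (u i)) ≤
      ∑ r ∈ Finset.range K, edist (h (w (i*K + r + 1))) (h (w (i*K + r))) := by
    intro i
    have htri := edist_le_range_sum_edist (fun r => h (w (i*K + r))) K
    have hiK : i*K + K = (i+1)*K := by ring
    rw [Nat.add_zero] at htri  -- maybe not needed
    calc edist (h (u (i+1))) (h (u i))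
        = edist (h (w (i*K))) (h (w ((i+1)*K))) := by
          rw [hblock i, hblock (i+1), edist_comm]
      _ ≤ ∑ r ∈ Finset.range K, edist (h (w (i*K + r))) (h (w (i*K + (r+1)))) := by
          have := edist_le_range_sum_edist (fun r => h (w (i*K + r))) K
          simpa [hiK] using this
      _ = ∑ r ∈ Finset.range K, edist (h (w (i*K + r + 1))) (h (w (i*K + r))) := by
          apply Finset.sum_congr rfl
          intro r _
          rw [edist_comm]
          ring_nf
  calc ∑ i ∈ Finset.range n, edist (h (u (i+1))) (h (u i))
      ≤ ∑ i ∈ Finset.range n, ∑ r ∈ Finset.range K,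
          edist (h (w (i*K + r + 1))) (h (w (i*K + r))) :=
        Finset.sum_le_sum (fun i _ => hperblock i)
    _ = ∑ j ∈ Finset.range (n*K), edist (h (w (j+1))) (h (w j)) :=
        (rm_block_sum (fun j => edist (h (w (j+1))) (h (w j))) K n).symm
    _ ≤ ∑ j ∈ Finset.range (n*K), ENNReal.ofReal
          (L * (dist (f₀ (w (j+1))) (f₀ (w j)) + dist (f₁ (w (j+1))) (f₁ (w j)))) := by
        apply Finset.sum_le_sum
        intro j _
        rw [edist_dist]
        exact ENNReal.ofReal_le_ofReal (key (w (j+1)) (w j) (hgap j))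
    _ = ENNReal.ofReal L * ∑ j ∈ Finset.range (n*K),
          (edist (f₀ (w (j+1))) (f₀ (w j)) + edist (f₁ (w (j+1))) (f₁ (w j))) := by
        rw [Finset.mul_sum]
        apply Finset.sum_congr rfl
        intro j _
        rw [ENNReal.ofReal_mul hL, ENNReal.ofReal_add dist_nonneg dist_nonneg,
          edist_dist, edist_dist]
    _ ≤ ENNReal.ofReal L * (eVariationOn f₀ Set.univ + eVariationOn f₁ Set.univ) := by
        apply mul_le_mul_right
        rw [Finset.sum_add_distrib]
        exact add_le_add
          (eVariationOn.sum_le (f := f₀) hwmono (fun i => Set.mem_univ _))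
          (eVariationOn.sum_le (f := f₁) hwmono (fun i => Set.mem_univ _))

end variation

section mainproof
open Real

variable {Y : Type*} [MetricSpace Y]

lemma rm_ruling (η₀ η₁ : unitInterval → Y) (F : unitInterval × unitInterval → Y)
    (hF0 : ∀ a : unitInterval, F (a, 0) = η₀ a)
    (hF1 : ∀ a : unitInterval, F (a, 1) = η₁ a)
    (hgeo : ∀ a s t : unitInterval,
      dist (F (a, s)) (F (a, t)) = |(s : ℝ) - (t : ℝ)| * dist (η₀ a) (η₁ a))
    (a : unitInterval) :
    ∃ γ : ℝ → Y, IsGeodesicParam γ (η₀ a) (η₁ a) ∧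
      ∀ t : unitInterval, γ ((t:ℝ) * dist (η₀ a) (η₁ a)) = F (a, t) := by
  set d := dist (η₀ a) (η₁ a) with hddef
  have hd0 : 0 ≤ d := dist_nonneg
  rcases eq_or_lt_of_le hd0 with hd | hd
  · -- degenerate case
    refine ⟨fun _ => η₀ a, ⟨rfl, ?_, ?_⟩, ?_⟩
    · have : η₀ a = η₁ a := by rwa [← dist_eq_zero, ← hddef, eq_comm]
      simpa using this.symm ▸ rfl
    · intro s hs t ht
      rw [← hddef, ← hd] at hs ht
      have hs' : s = 0 := le_antisymm hs.2 hs.1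
      have ht' : t = 0 := le_antisymm ht.2 ht.1
      rw [hs', ht', dist_self]
      simp
    · intro t
      have h := hgeo a t 0
      rw [← hddef, ← hd, mul_zero, dist_eq_zero, hF0] at h
      exact h.symm
  · refine ⟨fun s => F (a, Set.projIcc 0 1 zero_le_one (s / d)), ⟨?_, ?_, ?_⟩, ?_⟩
    · show F (a, Set.projIcc 0 1 zero_le_one (0 / d)) = η₀ a
      rw [zero_div]
      rw [show Set.projIcc (0:ℝ) 1 zero_le_one 0 = 0 from Set.projIcc_left _]
      exact hF0 a
    · show F (a, Set.projIcc 0 1 zero_le_one (d / d)) = η₁ a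
      rw [div_self hd.ne']
      rw [show Set.projIcc (0:ℝ) 1 zero_le_one 1 = 1 from Set.projIcc_right _]
      exact hF1 a
    · intro s hs t ht
      rw [← hddef] at hs ht
      have hsmem : s / d ∈ Set.Icc (0:ℝ) 1 :=
        ⟨div_nonneg hs.1 hd0, by rw [div_le_one hd]; exact hs.2⟩
      have htmem : t / d ∈ Set.Icc (0:ℝ) 1 :=
        ⟨div_nonneg ht.1 hd0, by rw [div_le_one hd]; exact ht.2⟩
      show dist (F (a, Set.projIcc 0 1 zero_le_one (s / d)))
          (F (a, Set.projIcc 0 1 zero_le_one (t / d))) = |s - t|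
      rw [Set.projIcc_of_mem _ hsmem, Set.projIcc_of_mem _ htmem, hgeo]
      show |s/d - t/d| * dist (η₀ a) (η₁ a) = |s - t|
      rw [← hddef, div_sub_div_same, abs_div, abs_of_pos hd]
      field_simp
    · intro t
      have htd : (t:ℝ) * d / d = (t:ℝ) := by field_simp
      show F (a, Set.projIcc 0 1 zero_le_one ((t:ℝ) * d / d)) = F (a, t)
      rw [htd, Set.projIcc_of_mem _ t.2, Subtype.coe_eta]

end mainproof

open Real
set_option maxHeartbeats 3000000

/-- quantitative Lipschitz comparison for ruled maps between rectifiable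
curves whose rulings have length bounded away from `R_κ`. -/
theorem ruled_map_quantitative {Y : Type*} [MetricSpace Y] (κ : ℝ)
    (hY : IsCATSpace κ Y) (η₀ η₁ : unitInterval → Y)
    (hη₀ : Continuous η₀) (hη₁ : Continuous η₁)
    (hr₀ : curveELength η₀ ≠ ⊤) (hr₁ : curveELength η₁ ≠ ⊤)
    (δ : ℝ) (hδ : 0 < δ)
    (hd : ∀ a : unitInterval,
      ENNReal.ofReal (dist (η₀ a) (η₁ a) + δ) ≤ modelDiam κ)
    (F : unitInterval × unitInterval → Y)
    (hF0 : ∀ a : unitInterval, F (a, 0) = η₀ a)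
    (hF1 : ∀ a : unitInterval, F (a, 1) = η₁ a)
    (hgeo : ∀ a s t : unitInterval,
      dist (F (a, s)) (F (a, t)) = |(s : ℝ) - (t : ℝ)| * dist (η₀ a) (η₁ a)) :
    ∃ L ρ : ℝ, 0 < L ∧ 0 < ρ ∧
      (∀ a b : unitInterval, dist (η₀ a) (η₀ b) ≤ ρ → dist (η₁ a) (η₁ b) ≤ ρ →
        ∀ t : unitInterval,
          dist (F (a, t)) (F (b, t)) ≤
            L * (dist (η₀ a) (η₀ b) + dist (η₁ a) (η₁ b))) ∧
      ∀ t : unitInterval,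
        curveELength (fun a => F (a, t)) ≤
          ENNReal.ofReal L * (curveELength η₀ + curveELength η₁) := by

  have hπ := Real.pi_pos
  choose γF hγF hγF2 using rm_ruling η₀ η₁ F hF0 hF1 hgeo
  choose τ hτ using fun (x y : Y) => hY.2.1 x y
  set ρ : ℝ := δ/2 with hρdef
  have hρ : 0 < ρ := by positivity
  set Cs : ℝ := if 0 < κ then
      (π/2) * Real.sqrt (max 1 (2 / (1 - Real.cos (min (Real.sqrt κ * δ) π)))) else 1
    with hCsdef
  set L : ℝ := max 1 Cs with hLdef
  have hL1 : (1:ℝ) ≤ L := le_max_left _ _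
  have hL0 : (0:ℝ) < L := lt_of_lt_of_le one_pos hL1
  have hCsL : Cs ≤ L := le_max_right _ _
  -- basic consequences of `hd`
  have hside : ∀ a : unitInterval, 0 < κ →
      Real.sqrt κ * dist (η₀ a) (η₁ a) ≤ π - Real.sqrt κ * δ := by
    intro a hκ
    have hs : (0:ℝ) < Real.sqrt κ := Real.sqrt_pos.2 hκ
    have h1 := hd a
    rw [modelDiam, if_neg (not_le.2 hκ)] at h1
    rw [ENNReal.ofReal_le_ofReal_iff (by positivity)] at h1
    have h2 : Real.sqrt κ * (dist (η₀ a) (η₁ a) + δ) ≤ Real.sqrt κ * (π / Real.sqrt κ) :=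
      mul_le_mul_of_nonneg_left h1 hs.le
    rw [mul_div_cancel₀ _ hs.ne'] at h2
    nlinarith
  have hδκ : 0 < κ → Real.sqrt κ * δ ≤ π := by
    intro hκ
    have h1 := hside 0 hκ
    nlinarith [mul_nonneg (Real.sqrt_nonneg κ) (dist_nonneg : 0 ≤ dist (η₀ 0) (η₁ 0))]
  -- the common scaling bound
  have hscaleL : ∀ u₁ u₂ : ℝ, 0 ≤ u₁ → 0 ≤ u₂ →
      (0 < κ → Real.sqrt κ * u₁ ≤ π - Real.sqrt κ * δ / 2) →
      (0 < κ → Real.sqrt κ * u₂ ≤ π - Real.sqrt κ * δ / 2) →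
      ∀ x u : ℝ, |x| ≤ 1 → 0 ≤ u → u ≤ 1 →
      modelSideLength κ (u * u₁) (u * u₂) x ≤ L * modelSideLength κ u₁ u₂ x := by
    intro u₁ u₂ h01 h02 hm1 hm2 x u hx hu0 hu1
    have hnn : 0 ≤ modelSideLength κ u₁ u₂ x := msl_nonneg h01 h02 hx
    by_cases hκ : 0 < κ
    · have hs : (0:ℝ) < Real.sqrt κ := Real.sqrt_pos.2 hκ
      have hd' : (0:ℝ) < Real.sqrt κ * δ / 2 := by positivity
      have h := msl_scale_pos hκ hd' h01 h02 (hm1 hκ) (hm2 hκ) hx hu0 hu1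
      rw [show 2 * (Real.sqrt κ * δ / 2) = Real.sqrt κ * δ by ring] at h
      have hCs : Cs = (π/2) * Real.sqrt (max 1 (2 / (1 - Real.cos (min (Real.sqrt κ * δ) π)))) := by
        rw [hCsdef, if_pos hκ]
      calc modelSideLength κ (u * u₁) (u * u₂) x
          ≤ (π/2) * Real.sqrt (max 1 (2 / (1 - Real.cos (min (Real.sqrt κ * δ) π)))) *
            modelSideLength κ u₁ u₂ x := h
        _ = Cs * modelSideLength κ u₁ u₂ x := by rw [hCs]
        _ ≤ L * modelSideLength κ u₁ u₂ x := mul_le_mul_of_nonneg_right hCsL hnn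
    · have h := msl_scale_nonpos (not_lt.1 hκ) h01 h02 hx hu0 hu1
      calc modelSideLength κ (u * u₁) (u * u₂) x ≤ modelSideLength κ u₁ u₂ x := h
        _ = 1 * modelSideLength κ u₁ u₂ x := (one_mul _).symm
        _ ≤ L * modelSideLength κ u₁ u₂ x := mul_le_mul_of_nonneg_right hL1 hnn
  -- perimeter bound helper
  have hperim : ∀ P : ℝ, (0 < κ → P ≤ 2 * (π / Real.sqrt κ) - δ) → 0 ≤ P →
      ENNReal.ofReal P < 2 * modelDiam κ := by
    intro P hP h0P
    by_cases hκ : 0 < κ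
    · have hs : (0:ℝ) < Real.sqrt κ := Real.sqrt_pos.2 hκ
      rw [modelDiam, if_neg (not_le.2 hκ)]
      rw [show (2:ℝ≥0∞) * ENNReal.ofReal (π / Real.sqrt κ)
          = ENNReal.ofReal (2 * (π / Real.sqrt κ)) by
        rw [ENNReal.ofReal_mul (by norm_num : (0:ℝ) ≤ 2)]
        norm_num]
      rw [ENNReal.ofReal_lt_ofReal_iff (by positivity)]
      have := hP hκ
      linarith
    · rw [modelDiam, if_pos (not_lt.1 hκ)]
      rw [ENNReal.mul_top (by norm_num)]
      exact ENNReal.ofReal_lt_top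
  -- the main local Lipschitz estimate
  have hmain : ∀ a b : unitInterval, dist (η₀ a) (η₀ b) ≤ ρ → dist (η₁ a) (η₁ b) ≤ ρ →
      ∀ t : unitInterval, dist (F (a, t)) (F (b, t)) ≤
        L * (dist (η₀ a) (η₀ b) + dist (η₁ a) (η₁ b)) := by
    intro a b hd0 hd1 t
    have hsqnn : (0:ℝ) ≤ Real.sqrt κ := Real.sqrt_nonneg κ
    set da := dist (η₀ a) (η₁ a) with hdadef
    set db := dist (η₀ b) (η₁ b) with hdbdef
    set e := dist (η₀ a) (η₁ b) with hedef
    set D0 := dist (η₀ a) (η₀ b) with hD0def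
    set D1 := dist (η₁ a) (η₁ b) with hD1def
    have h0da : 0 ≤ da := dist_nonneg
    have h0db : 0 ≤ db := dist_nonneg
    have h0e : 0 ≤ e := dist_nonneg
    have h0D0 : 0 ≤ D0 := dist_nonneg
    have h0D1 : 0 ≤ D1 := dist_nonneg
    have hea : e ≤ da + D1 := by
      rw [hedef, hdadef, hD1def]
      exact dist_triangle _ _ _
    have heb : e ≤ D0 + db := by
      rw [hedef, hdbdef, hD0def]
      exact dist_triangle _ _ _
    -- κ > 0 side bounds
    have hsa : 0 < κ → Real.sqrt κ * da ≤ π - Real.sqrt κ * δ := fun hκ => hside a hκ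
    have hsb : 0 < κ → Real.sqrt κ * db ≤ π - Real.sqrt κ * δ := fun hκ => hside b hκ
    have hse : 0 < κ → Real.sqrt κ * e ≤ π - Real.sqrt κ * δ / 2 := by
      intro hκ
      have h1 := hsa hκ
      have h2 : Real.sqrt κ * e ≤ Real.sqrt κ * (da + D1) :=
        mul_le_mul_of_nonneg_left hea hsqnn
      have h3 : Real.sqrt κ * D1 ≤ Real.sqrt κ * ρ := mul_le_mul_of_nonneg_left hd1 hsqnn
      rw [hρdef] at h3
      nlinarith
    have hsa2 : 0 < κ → Real.sqrt κ * da ≤ π - Real.sqrt κ * δ / 2 := by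
      intro hκ
      have := hsa hκ
      nlinarith [mul_nonneg hsqnn hδ.le]
    have hsb2 : 0 < κ → Real.sqrt κ * db ≤ π - Real.sqrt κ * δ / 2 := by
      intro hκ
      have := hsb hκ
      nlinarith [mul_nonneg hsqnn hδ.le]
    -- the connecting geodesic
    set m := τ (η₀ a) (η₁ b) with hmdef
    have hm : IsGeodesicParam m (η₀ a) (η₁ b) := hτ _ _
    have ht0 : (0:ℝ) ≤ (t:ℝ) := t.2.1
    have ht1 : (t:ℝ) ≤ 1 := t.2.2
    -- first application of CORE (apex η₀ a)
    have app1 : dist (γF a ((t:ℝ) * da)) (m ((t:ℝ) * e)) ≤ L * D1 := by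
      have := rm_core hY hL1 (η₀ a) (η₁ a) (η₁ b) (γF a) m (hγF a) hm
        (hperim (dist (η₀ a) (η₁ a) + dist (η₁ a) (η₁ b) + dist (η₁ b) (η₀ a))
          (by
            intro hκ
            have hs : (0:ℝ) < Real.sqrt κ := Real.sqrt_pos.2 hκ
            have h1 := hsa hκ
            have h2 := hse hκ
            have h3 : Real.sqrt κ * D1 ≤ Real.sqrt κ * ρ :=
              mul_le_mul_of_nonneg_left hd1 hsqnn
            rw [hρdef] at h3
            rw [← hdadef, ← hD1def, dist_comm (η₁ b) (η₀ a), ← hedef]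
            rw [← mul_le_mul_iff_right₀ hs, mul_sub]
            rw [show Real.sqrt κ * (2 * (π / Real.sqrt κ)) = 2 * π by
              field_simp]
            nlinarith
          ) (by positivity))
        (fun hκ => by
          have := hsa hκ
          have h4 : 0 < Real.sqrt κ * δ := by
            have := Real.sqrt_pos.2 hκ
            positivity
          rw [← hdadef]
          linarith)
        (fun hκ => by
          have := hse hκ
          have h4 : 0 < Real.sqrt κ * δ / 2 := by
            have := Real.sqrt_pos.2 hκ
            positivity
          rw [← hedef]
          linarith)
        (fun hκ => by
          have h3 : Real.sqrt κ * D1 ≤ Real.sqrt κ * ρ :=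
            mul_le_mul_of_nonneg_left hd1 hsqnn
          rw [hρdef] at h3
          have := hδκ hκ
          rw [← hD1def]
          nlinarith [mul_nonneg hsqnn h0D1])
        (fun hκ => by
          have h1 := hsa hκ
          have h2 := hse hκ
          have h3 : Real.sqrt κ * D1 ≤ Real.sqrt κ * ρ :=
            mul_le_mul_of_nonneg_left hd1 hsqnn
          rw [hρdef] at h3
          rw [← hdadef, ← hD1def, dist_comm (η₁ b) (η₀ a), ← hedef]
          nlinarith [mul_nonneg hsqnn h0D1])
        (by
          intro x u hx hu0 hu1
          rw [← hdadef, ← hedef]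
          exact hscaleL da e h0da h0e hsa2 hse x u hx hu0 hu1)
        (t:ℝ) ht0 ht1
      rw [← hdadef, ← hedef, ← hD1def] at this
      exact this
    -- second application of CORE (apex η₁ b)
    have app2 : dist (m ((t:ℝ) * e)) (γF b ((t:ℝ) * db)) ≤ L * D0 := by
      have hrev1 : IsGeodesicParam (fun s => m (dist (η₀ a) (η₁ b) - s)) (η₁ b) (η₀ a) :=
        rm_geod_reverse hm
      have hrev2 : IsGeodesicParam (fun s => γF b (dist (η₀ b) (η₁ b) - s)) (η₁ b) (η₀ b) :=
        rm_geod_reverse (hγF b)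
      have hba : dist (η₁ b) (η₀ a) = e := by rw [hedef, dist_comm]
      have hbb : dist (η₁ b) (η₀ b) = db := by rw [hdbdef, dist_comm]
      have := rm_core hY hL1 (η₁ b) (η₀ a) (η₀ b)
        (fun s => m (dist (η₀ a) (η₁ b) - s)) (fun s => γF b (dist (η₀ b) (η₁ b) - s))
        hrev1 hrev2
        (hperim (dist (η₁ b) (η₀ a) + dist (η₀ a) (η₀ b) + dist (η₀ b) (η₁ b))
          (by
            intro hκ
            have hs : (0:ℝ) < Real.sqrt κ := Real.sqrt_pos.2 hκ
            have h1 := hsb hκ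
            have h2 := hse hκ
            have h3 : Real.sqrt κ * D0 ≤ Real.sqrt κ * ρ :=
              mul_le_mul_of_nonneg_left hd0 hsqnn
            rw [hρdef] at h3
            rw [hba, ← hD0def, ← hdbdef]
            rw [← mul_le_mul_iff_right₀ hs, mul_sub]
            rw [show Real.sqrt κ * (2 * (π / Real.sqrt κ)) = 2 * π by
              field_simp]
            nlinarith
          ) (by positivity))
        (fun hκ => by
          have := hse hκ
          have h4 : 0 < Real.sqrt κ * δ / 2 := by
            have := Real.sqrt_pos.2 hκ
            positivity
          rw [hba]
          linarith)
        (fun hκ => by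
          have := hsb hκ
          have h4 : 0 < Real.sqrt κ * δ := by
            have := Real.sqrt_pos.2 hκ
            positivity
          rw [hbb]
          linarith)
        (fun hκ => by
          have h3 : Real.sqrt κ * D0 ≤ Real.sqrt κ * ρ :=
            mul_le_mul_of_nonneg_left hd0 hsqnn
          rw [hρdef] at h3
          have := hδκ hκ
          rw [← hD0def]
          nlinarith [mul_nonneg hsqnn h0D0])
        (fun hκ => by
          have h1 := hsb hκ
          have h2 := hse hκ
          have h3 : Real.sqrt κ * D0 ≤ Real.sqrt κ * ρ :=
            mul_le_mul_of_nonneg_left hd0 hsqnn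
          rw [hρdef] at h3
          rw [hba, ← hD0def, ← hdbdef]
          nlinarith [mul_nonneg hsqnn h0D0])
        (by
          intro x u hx hu0 hu1
          rw [hba, hbb]
          exact hscaleL e db h0e h0db hse hsb2 x u hx hu0 hu1)
        (1 - (t:ℝ)) (by linarith) (by linarith)
      beta_reduce at this
      rw [hba, hbb, ← hD0def] at this
      have harg1 : dist (η₀ a) (η₁ b) - (1 - (t:ℝ)) * e = (t:ℝ) * e := by
        rw [← hedef]; ring
      have harg2 : dist (η₀ b) (η₁ b) - (1 - (t:ℝ)) * db = (t:ℝ) * db := by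
        rw [← hdbdef]; ring
      rw [harg1, harg2] at this
      exact this
    -- combine
    have hFa : γF a ((t:ℝ) * da) = F (a, t) := hγF2 a t
    have hFb : γF b ((t:ℝ) * db) = F (b, t) := hγF2 b t
    calc dist (F (a, t)) (F (b, t))
        ≤ dist (F (a, t)) (m ((t:ℝ) * e)) + dist (m ((t:ℝ) * e)) (F (b, t)) :=
          dist_triangle _ _ _
      _ ≤ L * D1 + L * D0 := by
          rw [← hFa, ← hFb]
          exact add_le_add app1 app2
      _ = L * (D0 + D1) := by ring
  refine ⟨L, ρ, hL0, hρ, hmain, ?_⟩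
  -- the variation bound
  intro t
  have huc0 : UniformContinuous η₀ := CompactSpace.uniformContinuous_of_continuous hη₀
  have huc1 : UniformContinuous η₁ := CompactSpace.uniformContinuous_of_continuous hη₁
  rw [Metric.uniformContinuous_iff] at huc0 huc1
  obtain ⟨ε₀, hε₀, hball0⟩ := huc0 ρ hρ
  obtain ⟨ε₁, hε₁, hball1⟩ := huc1 ρ hρ
  set ε := min ε₀ ε₁ / 2 with hεdef
  have hε : 0 < ε := by
    have := lt_min hε₀ hε₁
    positivity
  have key : ∀ a b : unitInterval, dist a b ≤ ε →
      dist (F (a, t)) (F (b, t)) ≤ L * (dist (η₀ a) (η₀ b) + dist (η₁ a) (η₁ b)) := by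
    intro a b hab
    have hab0 : dist a b < ε₀ := by
      have h1 : ε < ε₀ := by
        have := min_le_left ε₀ ε₁
        rw [hεdef]
        linarith [lt_min hε₀ hε₁]
      linarith
    have hab1 : dist a b < ε₁ := by
      have h1 : ε < ε₁ := by
        have := min_le_right ε₀ ε₁
        rw [hεdef]
        linarith [lt_min hε₀ hε₁]
      linarith
    exact hmain a b (hball0 hab0).le (hball1 hab1).le t
  rw [curveELength, curveELength, curveELength]
  exact rm_evar_bound (fun a => F (a, t)) η₀ η₁ L ε hL0.le hε key
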